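/- Let V be a complex vector space of dimension n ≥ 3 and B a nondegenerate symmetric bilinear form on V. Then the orthogonal Lie algebra so(B) = {A ∈ End(V) : B(Ax,y) + B(x,Ay) = 0 for all x,y} is a skew-Berger algebra: so(B) equals the ℂ-span of the set {R(x,y) : R ∈ 𝓡̄(so(B)), x, y ∈ V}. -/

import Mathlib

/-- A skew-curvature tensor of type `h`. -/
def IsSkewCurv {V : Type*} [AddCommGroup V] [Module ℂ V]
    (h : Submodule ℂ (Module.End ℂ V)) (R : V →ₗ[ℂ] V →ₗ[ℂ] Module.End ℂ V) : Prop :=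
  (∀ x y, R x y = R y x) ∧ (∀ x y, R x y ∈ h) ∧
  (∀ x y z, R x y z + R y z x + R z x y = 0)

/-- `h` is a skew-Berger algebra. -/
def IsSkewBerger {V : Type*} [AddCommGroup V] [Module ℂ V]
    (h : Submodule ℂ (Module.End ℂ V)) : Prop :=
  h = Submodule.span ℂ
    {T | ∃ R : V →ₗ[ℂ] V →ₗ[ℂ] Module.End ℂ V,
      IsSkewCurv h R ∧ ∃ x y : V, T = R x y}

/-- The orthogonal/symplectic Lie algebra of a bilinear form `B`:
`{A ∈ End(V) : B(Ax,y) + B(x,Ay) = 0}`, as a subspace of `End(V)`. -/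
def skewAlg {V : Type*} [AddCommGroup V] [Module ℂ V]
    (B : V →ₗ[ℂ] V →ₗ[ℂ] ℂ) : Submodule ℂ (Module.End ℂ V) where
  carrier := {A | ∀ x y : V, B (A x) y + B x (A y) = 0}
  add_mem' := by
    intro a b ha hb x y
    have h1 := ha x y
    have h2 := hb x y
    simp only [LinearMap.add_apply, map_add] at *
    linear_combination h1 + h2
  zero_mem' := by
    intro x y
    simp
  smul_mem' := by
    intro c a ha x y
    have h := ha x y
    simp only [LinearMap.smul_apply, map_smul, smul_eq_mul] at *
    linear_combination c * h

section aux

variable {V : Type*} [AddCommGroup V] [Module ℂ V]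



noncomputable def curvEnd (B : V →ₗ[ℂ] V →ₗ[ℂ] ℂ) (A : Module.End ℂ V) (x y : V) :
    Module.End ℂ V :=
  (B x).smulRight (A y) + (B y).smulRight (A x) - (B (A x)).smulRight y
    - (B (A y)).smulRight x - (2 * B x y) • A

@[simp] lemma curvEnd_apply (B : V →ₗ[ℂ] V →ₗ[ℂ] ℂ) (A : Module.End ℂ V) (x y z : V) :
    curvEnd B A x y z = B x z • A y + B y z • A x - B (A x) z • y
      - B (A y) z • x - (2 * B x y) • A z := by
  simp [curvEnd]

noncomputable def curvR (B : V →ₗ[ℂ] V →ₗ[ℂ] ℂ) (A : Module.End ℂ V) :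
    V →ₗ[ℂ] V →ₗ[ℂ] Module.End ℂ V :=
  LinearMap.mk₂ ℂ (curvEnd B A)
    (by intro x x' y; ext z; simp [mul_add, add_mul, add_smul]; module)
    (by intro c x y; ext z; simp [mul_assoc, mul_left_comm, smul_smul]; module)
    (by intro x y y'; ext z; simp [mul_add, add_mul, add_smul]; module)
    (by intro c x y; ext z; simp [mul_assoc, mul_left_comm, smul_smul]; module)

@[simp] lemma curvR_apply (B : V →ₗ[ℂ] V →ₗ[ℂ] ℂ) (A : Module.End ℂ V) (x y : V) :
    curvR B A x y = curvEnd B A x y := rfl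

lemma curvR_symm (B : V →ₗ[ℂ] V →ₗ[ℂ] ℂ) (A : Module.End ℂ V)
    (hBsymm : ∀ x y : V, B x y = B y x) (x y : V) : curvR B A x y = curvR B A y x := by
  ext z
  simp only [curvR_apply, curvEnd_apply]
  rw [hBsymm x y]
  module

lemma curvR_bianchi (B : V →ₗ[ℂ] V →ₗ[ℂ] ℂ) (A : Module.End ℂ V)
    (hBsymm : ∀ x y : V, B x y = B y x)
    (hA : ∀ x y : V, B (A x) y + B x (A y) = 0) (x y z : V) :
    curvR B A x y z + curvR B A y z x + curvR B A z x y = 0 := by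
  simp only [curvR_apply, curvEnd_apply]
  match_scalars
  · linear_combination hBsymm x z
  · linear_combination -hBsymm y z
  · linear_combination -hA x z + hBsymm x (A z)
  · linear_combination -hA y z + hBsymm y (A z)
  · linear_combination -hBsymm x y
  · linear_combination -hA y x + hBsymm y (A x)

lemma curvR_mem (B : V →ₗ[ℂ] V →ₗ[ℂ] ℂ) (A : Module.End ℂ V)
    (hBsymm : ∀ x y : V, B x y = B y x)
    (hA : ∀ x y : V, B (A x) y + B x (A y) = 0) (x y z w : V) :
    B (curvR B A x y z) w + B z (curvR B A x y w) = 0 := by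
  simp only [curvR_apply, curvEnd_apply]
  simp only [map_add, map_sub, map_smul, LinearMap.add_apply, LinearMap.sub_apply,
    LinearMap.smul_apply, smul_eq_mul]
  linear_combination B (A y) w * hBsymm x z + B (A x) w * hBsymm y z
    + B y w * hBsymm z (A x) + B x w * hBsymm z (A y) - 2 * B x y * hA z w


lemma key_expand [FiniteDimensional ℂ V] (B : V →ₗ[ℂ] V →ₗ[ℂ] ℂ)
    {ι : Type*} [Fintype ι] (v : Module.Basis ι ℂ V)
    (hv : ∀ i j, i ≠ j → B (v i) (v j) = 0)
    (hd : ∀ i, B (v i) (v i) ≠ 0) (z : V) :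
    ∑ i, ((B (v i) (v i))⁻¹ * B (v i) z) • v i = z := by
  have : (∑ i, (B (v i) (v i))⁻¹ • (B (v i)).smulRight (v i)) = LinearMap.id (R := ℂ) (M := V) := by
    apply v.ext
    intro j
    simp only [LinearMap.sum_apply, LinearMap.smul_apply, LinearMap.smulRight_apply,
      LinearMap.id_apply]
    rw [Finset.sum_eq_single j]
    · rw [smul_smul, inv_mul_cancel₀ (hd j), one_smul]
    · intro i _ hij
      rw [hv i j hij, zero_smul, smul_zero]
    · intro h; exact absurd (Finset.mem_univ j) h
  have h := congrArg (fun F => F z) this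
  simp only [LinearMap.sum_apply, LinearMap.smul_apply, LinearMap.smulRight_apply,
    LinearMap.id_apply, smul_smul] at h
  exact h
lemma curv_sum [FiniteDimensional ℂ V] (B : V →ₗ[ℂ] V →ₗ[ℂ] ℂ) (A : Module.End ℂ V)
    {ι : Type*} [Fintype ι] (v : Module.Basis ι ℂ V)
    (hv : ∀ i j, i ≠ j → B (v i) (v j) = 0)
    (hd : ∀ i, B (v i) (v i) ≠ 0)
    (hA : ∀ x y : V, B (A x) y + B x (A y) = 0) :
    ∑ i, (B (v i) (v i))⁻¹ • curvR B A (v i) (v i)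
      = ((4 : ℂ) - 2 * (Fintype.card ι : ℂ)) • A := by
  ext z
  simp only [LinearMap.sum_apply, LinearMap.smul_apply]
  have step : ∀ i, (B (v i) (v i))⁻¹ • (curvR B A (v i) (v i) z)
      = (2 * ((B (v i) (v i))⁻¹ * B (v i) z)) • A (v i)
        + (2 * ((B (v i) (v i))⁻¹ * B (v i) (A z))) • v i - (2 : ℂ) • A z := by
    intro i
    have hdi := hd i
    have h1 := hA (v i) z
    simp only [curvR_apply, curvEnd_apply]
    match_scalars
    · ring
    · field_simp
      linear_combination -2 * hA (v i) z
    · field_simp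
  rw [Finset.sum_congr rfl (fun i _ => step i), Finset.sum_sub_distrib,
    Finset.sum_add_distrib, Finset.sum_const]
  have h1 : ∑ i, (2 * ((B (v i) (v i))⁻¹ * B (v i) z)) • A (v i) = (2 : ℂ) • A z := by
    calc ∑ i, (2 * ((B (v i) (v i))⁻¹ * B (v i) z)) • A (v i)
        = (2:ℂ) • A (∑ i, ((B (v i) (v i))⁻¹ * B (v i) z) • v i) := by
          rw [map_sum, Finset.smul_sum]
          exact Finset.sum_congr rfl fun i _ => by rw [map_smul, mul_smul]
      _ = (2:ℂ) • A z := by rw [key_expand B v hv hd z]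
  have h2 : ∑ i, (2 * ((B (v i) (v i))⁻¹ * B (v i) (A z))) • v i = (2 : ℂ) • A z := by
    calc ∑ i, (2 * ((B (v i) (v i))⁻¹ * B (v i) (A z))) • v i
        = (2:ℂ) • ∑ i, ((B (v i) (v i))⁻¹ * B (v i) (A z)) • v i := by
          rw [Finset.smul_sum]
          exact Finset.sum_congr rfl fun i _ => by rw [mul_smul]
      _ = (2:ℂ) • A z := by rw [key_expand B v hv hd (A z)]
  rw [h1, h2]
  match_scalars
  push_cast [Finset.card_univ]
  ring

end aux

/-- for a nondegenerate symmetric bilinear form `B` on a complex vector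
space of dimension `n ≥ 3`, the orthogonal Lie algebra `so(B)` is a skew-Berger
algebra. -/
theorem stmt4 {V : Type*} [AddCommGroup V] [Module ℂ V] [FiniteDimensional ℂ V]
    (n : ℕ) (hn : 3 ≤ n) (hdim : Module.finrank ℂ V = n)
    (B : V →ₗ[ℂ] V →ₗ[ℂ] ℂ)
    (hBsymm : ∀ x y : V, B x y = B y x)
    (hBnd : ∀ x : V, (∀ y : V, B x y = 0) → x = 0) :
    IsSkewBerger (skewAlg B) := by
  classical
  subst hdim
  rw [IsSkewBerger]
  refine le_antisymm ?_ ?_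
  · -- skewAlg B ⊆ span
    intro A hAmem
    have hA : ∀ x y : V, B (A x) y + B x (A y) = 0 := hAmem
    haveI : Invertible (2:ℂ) := invertibleOfNonzero two_ne_zero
    have hsym : B.IsSymm := ⟨fun x y => by simpa using (hBsymm x y)⟩
    obtain ⟨v, hv⟩ := LinearMap.BilinForm.exists_orthogonal_basis hsym
    have hv' : ∀ i j, i ≠ j → B (v i) (v j) = 0 := LinearMap.isOrthoᵢ_def.mp hv
    have hd : ∀ i, B (v i) (v i) ≠ 0 := by
      intro i h0
      have hzero : B (v i) = 0 := by
        apply v.ext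
        intro j
        by_cases hij : i = j
        · subst hij; simpa using h0
        · simpa using hv' i j hij
      have : v i = 0 := hBnd (v i) (fun y => by rw [hzero]; simp)
      exact v.ne_zero i this
    have hsum := curv_sum B A v hv' hd hA
    rw [Fintype.card_fin] at hsum
    have hgen : ∀ x y : V, curvR B A x y ∈
        {T | ∃ R : V →ₗ[ℂ] V →ₗ[ℂ] Module.End ℂ V,
          IsSkewCurv (skewAlg B) R ∧ ∃ x y : V, T = R x y} := by
      intro x y
      refine ⟨curvR B A, ⟨curvR_symm B A hBsymm, ?_, curvR_bianchi B A hBsymm hA⟩, x, y, rfl⟩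
      intro a b
      exact fun z w => curvR_mem B A hBsymm hA a b z w
    have hc : (4 : ℂ) - 2 * (Module.finrank ℂ V : ℂ) ≠ 0 := by
      intro h
      have h2 : (Module.finrank ℂ V : ℂ) = 2 := by linear_combination -h/2
      have : Module.finrank ℂ V = 2 := by exact_mod_cast h2
      omega
    have hspan : ((4:ℂ) - 2 * (Module.finrank ℂ V : ℂ)) • A ∈ Submodule.span ℂ
        {T | ∃ R : V →ₗ[ℂ] V →ₗ[ℂ] Module.End ℂ V,
          IsSkewCurv (skewAlg B) R ∧ ∃ x y : V, T = R x y} := by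
      rw [← hsum]
      exact Submodule.sum_mem _ fun i _ =>
        Submodule.smul_mem _ _ (Submodule.subset_span (hgen (v i) (v i)))
    have := Submodule.smul_mem _ ((4:ℂ) - 2 * (Module.finrank ℂ V : ℂ))⁻¹ hspan
    rwa [smul_smul, inv_mul_cancel₀ hc, one_smul] at this
  · rw [Submodule.span_le]
    rintro T ⟨R, ⟨-, hmem, -⟩, x, y, rfl⟩
    exact hmem x y
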